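/- Let q ≥ 1, k ≥ 2, s ≥ 1 be integers and let f : [q] × [k-1] → ℤ be a function satisfying: (1) for all c ∈ [q] and ℓ ∈ [k-1], Σ_{b=1}^{c} f(b,ℓ) ≥ 0; (2) Σ_{ℓ=1}^{k-1} Σ_{b=1}^{q} f(b,ℓ) = 0; and (3) for all ℓ ∈ [k-1], Σ_{c=1}^{q} Σ_{b=c}^{q} f(b,ℓ) = 0. Then f(b,ℓ) = 0 for all b ∈ [q] and ℓ ∈ [k-1]. -/

import Mathlib

/-- Key counting lemma: if `f : [q] × [k-1] → ℤ` has all prefix sums (in the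
first coordinate) nonnegative, total sum zero, and for each `ℓ` the sum of all
suffix sums vanishes, then `f` is identically zero. -/
theorem stmt_1 (q k s : ℕ) (hq : 1 ≤ q) (hk : 2 ≤ k) (hs : 1 ≤ s)
    (f : ℕ → ℕ → ℤ)
    (h1 : ∀ c ∈ Finset.Icc 1 q, ∀ ℓ ∈ Finset.Icc 1 (k - 1),
      0 ≤ ∑ b ∈ Finset.Icc 1 c, f b ℓ)
    (h2 : ∑ ℓ ∈ Finset.Icc 1 (k - 1), ∑ b ∈ Finset.Icc 1 q, f b ℓ = 0)
    (h3 : ∀ ℓ ∈ Finset.Icc 1 (k - 1),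
      ∑ c ∈ Finset.Icc 1 q, ∑ b ∈ Finset.Icc c q, f b ℓ = 0) :
    ∀ b ∈ Finset.Icc 1 q, ∀ ℓ ∈ Finset.Icc 1 (k - 1), f b ℓ = 0 := by
  intro b hb ℓ hℓ
  -- total sum in first coordinate vanishes for each ℓ
  have hgq : ∑ x ∈ Finset.Icc 1 q, f x ℓ = 0 := by
    have hnn : ∀ l ∈ Finset.Icc 1 (k-1), 0 ≤ ∑ x ∈ Finset.Icc 1 q, f x l :=
      fun l hl => h1 q (by simp [hq]) l hl
    exact (Finset.sum_eq_zero_iff_of_nonneg hnn).mp h2 ℓ hℓ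
  set g : ℕ → ℤ := fun c => ∑ x ∈ Finset.Ioc 0 c, f x ℓ with hgdef
  have hIcc : ∀ c : ℕ, Finset.Icc 1 c = Finset.Ioc 0 c := by
    intro c; rw [← Finset.Icc_add_one_left_eq_Ioc, zero_add]
  have hgq' : g q = 0 := by rw [show g q = ∑ x ∈ Finset.Ioc 0 q, f x ℓ from rfl, ← hIcc]; exact hgq
  -- g c ≥ 0 for all c ≤ q
  have hgnn : ∀ c ≤ q, 0 ≤ g c := by
    intro c hc
    rcases Nat.eq_zero_or_pos c with rfl | hc1
    · simp [hgdef]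
    · have := h1 c (Finset.mem_Icc.mpr ⟨hc1, hc⟩) ℓ hℓ
      rwa [hIcc] at this
  -- suffix sum identity
  have hsuf : ∀ c ∈ Finset.Icc 1 q, ∑ x ∈ Finset.Icc c q, f x ℓ = g q - g (c - 1) := by
    intro c hc
    rw [Finset.mem_Icc] at hc
    have hc1 : c - 1 + 1 = c := Nat.succ_pred_eq_of_pos hc.1
    have hsplit : g (c - 1) + ∑ x ∈ Finset.Ioc (c-1) q, f x ℓ = g q :=
      Finset.sum_Ioc_consecutive _ (Nat.zero_le _) (le_trans (Nat.sub_le c 1) hc.2)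
    have hset : Finset.Icc c q = Finset.Ioc (c-1) q := by
      ext x; simp [Finset.mem_Icc, Finset.mem_Ioc]; omega
    rw [hset]; linarith
  have h3' := h3 ℓ hℓ
  rw [Finset.sum_congr rfl hsuf] at h3'
  have hsum0 : ∑ c ∈ Finset.Icc 1 q, g (c - 1) = 0 := by
    rw [Finset.sum_sub_distrib] at h3'
    simp [hgq'] at h3'
    linarith [h3']
  have hall : ∀ c ∈ Finset.Icc 1 q, g (c - 1) = 0 := by
    refine (Finset.sum_eq_zero_iff_of_nonneg ?_).mp hsum0
    intro c hc
    rw [Finset.mem_Icc] at hc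
    exact hgnn _ (le_trans (Nat.sub_le c 1) hc.2)
  -- g vanishes on [0, q]
  have hgzero : ∀ c ≤ q, g c = 0 := by
    intro c hc
    rcases eq_or_lt_of_le hc with rfl | hlt
    · exact hgq'
    · have : c + 1 - 1 = c := rfl
      have := hall (c+1) (Finset.mem_Icc.mpr ⟨Nat.le_add_left 1 c, hlt⟩)
      simpa using this
  rw [Finset.mem_Icc] at hb
  have hb1 : b - 1 + 1 = b := Nat.succ_pred_eq_of_pos hb.1
  have hstep : g (b - 1) + ∑ x ∈ Finset.Ioc (b-1) b, f x ℓ = g b :=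
    Finset.sum_Ioc_consecutive _ (Nat.zero_le _) (Nat.sub_le b 1)
  have hsingle : Finset.Ioc (b-1) b = {b} := by
    ext x; simp [Finset.mem_Ioc]; omega
  rw [hsingle, Finset.sum_singleton, hgzero b hb.2,
    hgzero (b-1) (le_trans (Nat.sub_le b 1) hb.2)] at hstep
  linarith
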